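/- For all a, b > 0 and ν ∈ [0,1]: exp((1/2)·ν·(1−ν)·(b−a)²/max(a,b)²) ≤ ((1−ν)·a + ν·b)/(a^(1−ν)·b^ν) ≤ exp((1/2)·ν·(1−ν)·(b−a)²/min(a,b)²). -/

import Mathlib

open Set Real

private lemma Lmin (a b t : ℝ) (ht0 : 0 ≤ t) (ht1 : t ≤ 1) :
    min a b ≤ a + t * (b - a) := by
  rcases le_total a b with h | h
  · have := min_eq_left h; nlinarith
  · have := min_eq_right h; nlinarith

private lemma Lmax (a b t : ℝ) (ht0 : 0 ≤ t) (ht1 : t ≤ 1) :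
    a + t * (b - a) ≤ max a b := by
  rcases le_total a b with h | h
  · have := max_eq_right h; nlinarith
  · have := max_eq_left h; nlinarith

private lemma hd1 (a b K t : ℝ) (h : 0 < a + t * (b - a)) :
    HasDerivAt (fun t => Real.log (a + t * (b - a))
        - ((1 - t) * Real.log a + t * Real.log b) - K / 2 * (t - t ^ 2))
      ((b - a) / (a + t * (b - a)) - (Real.log b - Real.log a) - K / 2 * (1 - 2 * t)) t := by
  have h1 : HasDerivAt (fun t : ℝ => a + t * (b - a)) (b - a) t := by
    simpa using ((hasDerivAt_id t).mul_const (b - a)).const_add a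
  have h2 : HasDerivAt (fun t => Real.log (a + t * (b - a))) ((b - a) / (a + t * (b - a))) t := by
    exact ((Real.hasDerivAt_log h.ne').comp t h1).congr_deriv (div_eq_inv_mul _ _).symm
  have h3 : HasDerivAt (fun t : ℝ => (1 - t) * Real.log a + t * Real.log b)
      (Real.log b - Real.log a) t := by
    have h := (((hasDerivAt_const t (1:ℝ)).sub (hasDerivAt_id t)).mul_const (Real.log a)).add
        ((hasDerivAt_id t).mul_const (Real.log b))
    exact h.congr_deriv (by ring)
  have h4 : HasDerivAt (fun t : ℝ => K / 2 * (t - t ^ 2)) (K / 2 * (1 - 2 * t)) t := by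
    have : HasDerivAt (fun t : ℝ => t - t ^ 2) (1 - 2 * t) t := by
      exact ((hasDerivAt_id t).sub (hasDerivAt_pow 2 t)).congr_deriv (by norm_num)
    exact this.const_mul _
  exact (h2.sub h3).sub h4

private lemma hd2 (a b K t : ℝ) (h : 0 < a + t * (b - a)) :
    HasDerivAt (fun t => (b - a) / (a + t * (b - a)) - (Real.log b - Real.log a)
        - K / 2 * (1 - 2 * t))
      (-((b - a) ^ 2 / (a + t * (b - a)) ^ 2) + K) t := by
  have h1 : HasDerivAt (fun t : ℝ => a + t * (b - a)) (b - a) t := by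
    simpa using ((hasDerivAt_id t).mul_const (b - a)).const_add a
  have h2 : HasDerivAt (fun t : ℝ => (b - a) / (a + t * (b - a)))
      (-((b - a) ^ 2 / (a + t * (b - a)) ^ 2)) t := by
    have := (h1.inv h.ne').const_mul (b - a)
    simpa [div_eq_mul_inv] using this.congr_deriv (by field_simp)
  have h4 : HasDerivAt (fun t : ℝ => K / 2 * (1 - 2 * t)) (-K) t := by
    have : HasDerivAt (fun t : ℝ => 1 - 2 * t) (-2 : ℝ) t := by
      exact ((hasDerivAt_const t (1:ℝ)).sub ((hasDerivAt_id t).const_mul 2)).congr_deriv (by ring)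
    simpa using (this.const_mul (K / 2)).congr_deriv (by ring)
  have := (h2.sub (hasDerivAt_const t (Real.log b - Real.log a))).sub h4
  exact this.congr_deriv (by ring)

private lemma contG (a b K : ℝ) (ha : 0 < a) (hb : 0 < b) :
    ContinuousOn (fun t => Real.log (a + t * (b - a))
        - ((1 - t) * Real.log a + t * Real.log b) - K / 2 * (t - t ^ 2)) (Icc 0 1) := by
  have hm : 0 < min a b := lt_min ha hb
  apply ContinuousOn.sub
  apply ContinuousOn.sub
  · exact Real.continuousOn_log.comp (by fun_prop)
      (fun t ht => ne_of_gt (lt_of_lt_of_le hm (Lmin a b t ht.1 ht.2)))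
  · fun_prop
  · fun_prop

private lemma gap_ge (a b K : ℝ) (ha : 0 < a) (hb : 0 < b)
    (hK : ∀ t ∈ Icc (0:ℝ) 1, K ≤ (b - a) ^ 2 / (a + t * (b - a)) ^ 2)
    (ν : ℝ) (hν : ν ∈ Icc (0:ℝ) 1) :
    K / 2 * (ν - ν ^ 2) ≤
      Real.log (a + ν * (b - a)) - ((1 - ν) * Real.log a + ν * Real.log b) := by
  have hm : 0 < min a b := lt_min ha hb
  have hpos : ∀ t ∈ Icc (0:ℝ) 1, 0 < a + t * (b - a) :=
    fun t ht => lt_of_lt_of_le hm (Lmin a b t ht.1 ht.2)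
  have hint : interior (Icc (0:ℝ) 1) = Ioo 0 1 := interior_Icc
  have hconc : ConcaveOn ℝ (Icc (0:ℝ) 1)
      (fun t => Real.log (a + t * (b - a))
        - ((1 - t) * Real.log a + t * Real.log b) - K / 2 * (t - t ^ 2)) := by
    apply concaveOn_of_hasDerivWithinAt2_nonpos (convex_Icc 0 1) (contG a b K ha hb)
      (f' := fun t => (b - a) / (a + t * (b - a)) - (Real.log b - Real.log a) - K / 2 * (1 - 2 * t))
      (f'' := fun t => -((b - a) ^ 2 / (a + t * (b - a)) ^ 2) + K)
    · intro t ht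
      rw [hint] at ht
      exact (hd1 a b K t (hpos t (Ioo_subset_Icc_self ht))).hasDerivWithinAt
    · intro t ht
      rw [hint] at ht
      exact (hd2 a b K t (hpos t (Ioo_subset_Icc_self ht))).hasDerivWithinAt
    · intro t ht
      rw [hint] at ht
      have := hK t (Ioo_subset_Icc_self ht)
      linarith
  have h0 : (0:ℝ) ∈ Icc (0:ℝ) 1 := by constructor <;> norm_num
  have h1 : (1:ℝ) ∈ Icc (0:ℝ) 1 := by constructor <;> norm_num
  have := hconc.2 h0 h1 (by linarith [hν.2] : (0:ℝ) ≤ 1 - ν) hν.1 (by ring)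
  simp only [smul_eq_mul, mul_zero, zero_mul, add_zero, zero_add, mul_one] at this
  rw [show a + 1 * (b - a) = b from by ring] at this
  ring_nf at this ⊢
  linarith

private lemma gap_le (a b K : ℝ) (ha : 0 < a) (hb : 0 < b)
    (hK : ∀ t ∈ Icc (0:ℝ) 1, (b - a) ^ 2 / (a + t * (b - a)) ^ 2 ≤ K)
    (ν : ℝ) (hν : ν ∈ Icc (0:ℝ) 1) :
    Real.log (a + ν * (b - a)) - ((1 - ν) * Real.log a + ν * Real.log b) ≤
      K / 2 * (ν - ν ^ 2) := by
  have hm : 0 < min a b := lt_min ha hb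
  have hpos : ∀ t ∈ Icc (0:ℝ) 1, 0 < a + t * (b - a) :=
    fun t ht => lt_of_lt_of_le hm (Lmin a b t ht.1 ht.2)
  have hint : interior (Icc (0:ℝ) 1) = Ioo 0 1 := interior_Icc
  have hconv : ConvexOn ℝ (Icc (0:ℝ) 1)
      (fun t => Real.log (a + t * (b - a))
        - ((1 - t) * Real.log a + t * Real.log b) - K / 2 * (t - t ^ 2)) := by
    apply convexOn_of_hasDerivWithinAt2_nonneg (convex_Icc 0 1) (contG a b K ha hb)
      (f' := fun t => (b - a) / (a + t * (b - a)) - (Real.log b - Real.log a) - K / 2 * (1 - 2 * t))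
      (f'' := fun t => -((b - a) ^ 2 / (a + t * (b - a)) ^ 2) + K)
    · intro t ht
      rw [hint] at ht
      exact (hd1 a b K t (hpos t (Ioo_subset_Icc_self ht))).hasDerivWithinAt
    · intro t ht
      rw [hint] at ht
      exact (hd2 a b K t (hpos t (Ioo_subset_Icc_self ht))).hasDerivWithinAt
    · intro t ht
      rw [hint] at ht
      have := hK t (Ioo_subset_Icc_self ht)
      linarith
  have h0 : (0:ℝ) ∈ Icc (0:ℝ) 1 := by constructor <;> norm_num
  have h1 : (1:ℝ) ∈ Icc (0:ℝ) 1 := by constructor <;> norm_num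
  have := hconv.2 h0 h1 (by linarith [hν.2] : (0:ℝ) ≤ 1 - ν) hν.1 (by ring)
  simp only [smul_eq_mul, mul_zero, zero_mul, add_zero, zero_add, mul_one] at this
  rw [show a + 1 * (b - a) = b from by ring] at this
  ring_nf at this ⊢
  linarith

theorem stmt_3 (a b : ℝ) (ha : 0 < a) (hb : 0 < b) (ν : ℝ) (hν : ν ∈ Set.Icc (0:ℝ) 1) :
    Real.exp (1/2 * ν * (1 - ν) * (b - a)^2 / (max a b)^2)
      ≤ ((1 - ν) * a + ν * b) / (a ^ (1 - ν) * b ^ ν) ∧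
    ((1 - ν) * a + ν * b) / (a ^ (1 - ν) * b ^ ν)
      ≤ Real.exp (1/2 * ν * (1 - ν) * (b - a)^2 / (min a b)^2) := by
  have hm : 0 < min a b := lt_min ha hb
  have hM : 0 < max a b := lt_of_lt_of_le hm (min_le_max)
  have hA : 0 < (1 - ν) * a + ν * b := by
    have := Lmin a b ν hν.1 hν.2
    nlinarith
  have hG : 0 < a ^ (1 - ν) * b ^ ν :=
    mul_pos (Real.rpow_pos_of_pos ha _) (Real.rpow_pos_of_pos hb _)
  have hratio : ((1 - ν) * a + ν * b) / (a ^ (1 - ν) * b ^ ν)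
      = Real.exp (Real.log (a + ν * (b - a)) - ((1 - ν) * Real.log a + ν * Real.log b)) := by
    rw [Real.exp_sub, Real.exp_log (by linarith [hA] : (0:ℝ) < a + ν * (b - a))]
    · congr 1
      · ring
      · rw [Real.exp_add, Real.rpow_def_of_pos ha, Real.rpow_def_of_pos hb]
        ring_nf
  constructor
  · rw [hratio, Real.exp_le_exp]
    have hKey := gap_ge a b ((b - a) ^ 2 / (max a b) ^ 2) ha hb ?_ ν hν
    · calc 1/2 * ν * (1 - ν) * (b - a)^2 / (max a b)^2
          = (b - a) ^ 2 / (max a b) ^ 2 / 2 * (ν - ν ^ 2) := by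
            field_simp
        _ ≤ _ := hKey
    · intro t ht
      have hL : 0 < a + t * (b - a) := lt_of_lt_of_le hm (Lmin a b t ht.1 ht.2)
      have hU : a + t * (b - a) ≤ max a b := Lmax a b t ht.1 ht.2
      exact div_le_div_of_nonneg_left (by positivity) (pow_pos hL 2) (by nlinarith)
  · rw [hratio, Real.exp_le_exp]
    have hKey := gap_le a b ((b - a) ^ 2 / (min a b) ^ 2) ha hb ?_ ν hν
    · calc Real.log (a + ν * (b - a)) - ((1 - ν) * Real.log a + ν * Real.log b)
          ≤ (b - a) ^ 2 / (min a b) ^ 2 / 2 * (ν - ν ^ 2) := hKey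
        _ = 1/2 * ν * (1 - ν) * (b - a)^2 / (min a b)^2 := by field_simp
    · intro t ht
      have hL : min a b ≤ a + t * (b - a) := Lmin a b t ht.1 ht.2
      exact div_le_div_of_nonneg_left (by positivity) (pow_pos hm 2) (by nlinarith)
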